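/- Fix an integer k ≥ 1, reals γ > 0 and t > 0, an arbitrary x = (x₁,…,x_k) ∈ ℝ^k, and reals r₁, …, r_k with r₁ > 0 and r_{i+1} > r_i + γ² for 1 ≤ i < k. For λ > 0 define F(λ) = (2π)^{−k} ∫_{ℝ^k} Π_{1 ≤ A < B ≤ k} (z_B − z_A)/(z_B − z_A − γ² − γ(z_A + z_B)/λ − z_A z_B/λ²) · Π_{j=1}^{k} [γλ/(γλ + z_j)] · exp(t z_j²/2 − x_j z_j) ds₁ ⋯ ds_k, where z_j = r_j + i s_j. Then for all sufficiently large λ the integrand of F(λ) has nonvanishing denominators and F(λ) is well defined, and lim_{λ → ∞} F(λ) = (2π)^{−k} ∫_{ℝ^k} Π_{1 ≤ A < B ≤ k} (z_B − z_A)/(z_B − z_A − γ²) · Π_{j=1}^{k} exp(t z_j²/2 − x_j z_j) ds₁ ⋯ ds_k. (This is the analytic content of the convergence of the rescaled moment formulas of the uniform Howitt–Warren flow to the moments of the multiplicative-noise stochastic heat equation.) -/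

import Mathlib

open Complex MeasureTheory Filter
open Topology

/-- `F(λ)`: the rescaled moment formula of the uniform Howitt–Warren flow, with
`z_j = r_j + i s_j` parametrizing vertical lines. -/
noncomputable def F (k : ℕ) (γ t : ℝ) (x r : Fin k → ℝ) (lam : ℝ) : ℂ :=
  (((2 * Real.pi) ^ k : ℝ))⁻¹ *
    ∫ s : Fin k → ℝ,
      (∏ p ∈ Finset.univ.filter (fun p : Fin k × Fin k => p.1 < p.2),
        ((((r p.2 : ℂ) + (s p.2 : ℂ) * Complex.I) - ((r p.1 : ℂ) + (s p.1 : ℂ) * Complex.I)) /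
          ((((r p.2 : ℂ) + (s p.2 : ℂ) * Complex.I) - ((r p.1 : ℂ) + (s p.1 : ℂ) * Complex.I))
            - (γ : ℂ) ^ 2
            - (γ : ℂ) * (((r p.1 : ℂ) + (s p.1 : ℂ) * Complex.I)
                + ((r p.2 : ℂ) + (s p.2 : ℂ) * Complex.I)) / (lam : ℂ)
            - ((r p.1 : ℂ) + (s p.1 : ℂ) * Complex.I)
                * ((r p.2 : ℂ) + (s p.2 : ℂ) * Complex.I) / (lam : ℂ) ^ 2))) *
      ∏ j : Fin k,
        ((γ : ℂ) * (lam : ℂ) / ((γ : ℂ) * (lam : ℂ) + ((r j : ℂ) + (s j : ℂ) * Complex.I))) *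
          Complex.exp ((t : ℂ) * ((r j : ℂ) + (s j : ℂ) * Complex.I) ^ 2 / 2
            - (x j : ℂ) * ((r j : ℂ) + (s j : ℂ) * Complex.I))

/-- The `λ → ∞` limit of `F(λ)`: the moment formula for the multiplicative-noise
stochastic heat equation. -/
noncomputable def G (k : ℕ) (γ t : ℝ) (x r : Fin k → ℝ) : ℂ :=
  (((2 * Real.pi) ^ k : ℝ))⁻¹ *
    ∫ s : Fin k → ℝ,
      (∏ p ∈ Finset.univ.filter (fun p : Fin k × Fin k => p.1 < p.2),
        ((((r p.2 : ℂ) + (s p.2 : ℂ) * Complex.I) - ((r p.1 : ℂ) + (s p.1 : ℂ) * Complex.I)) /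
          ((((r p.2 : ℂ) + (s p.2 : ℂ) * Complex.I) - ((r p.1 : ℂ) + (s p.1 : ℂ) * Complex.I))
            - (γ : ℂ) ^ 2))) *
      ∏ j : Fin k,
        Complex.exp ((t : ℂ) * ((r j : ℂ) + (s j : ℂ) * Complex.I) ^ 2 / 2
          - (x j : ℂ) * ((r j : ℂ) + (s j : ℂ) * Complex.I))

section helpers
lemma D_decomp (γ lam rA sA rB sB : ℝ) (hlam : lam ≠ 0) :
    (((rB:ℂ) + sB*I) - ((rA:ℂ) + sA*I)) - (γ:ℂ)^2
      - (γ:ℂ) * (((rA:ℂ) + sA*I) + ((rB:ℂ) + sB*I)) / (lam:ℂ)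
      - ((rA:ℂ) + sA*I) * ((rB:ℂ) + sB*I) / (lam:ℂ)^2
    = ((rB - rA - γ^2 - γ*(rA+rB)/lam - (rA*rB - sA*sB)/lam^2 : ℝ) : ℂ)
      + ((sB*(1 - γ/lam - rA/lam^2) - sA*(1 + γ/lam + rB/lam^2) : ℝ) : ℂ) * I := by
  have hl : (lam:ℂ) ≠ 0 := Complex.ofReal_ne_zero.mpr hlam
  push_cast
  field_simp
  rw [Complex.ext_iff]
  constructor <;>
    simp [Complex.mul_re, Complex.mul_im, Complex.add_re, Complex.add_im, Complex.sub_re,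
      Complex.sub_im, pow_two] <;> ring_nf <;> simp

lemma sqrt_mul_le_half_add {a b : ℝ} (ha : 0 ≤ a) (hb : 0 ≤ b) :
    Real.sqrt (a*b) ≤ (a+b)/2 := by
  have h : a*b ≤ ((a+b)/2)^2 := by nlinarith [sq_nonneg (a-b)]
  calc Real.sqrt (a*b) ≤ Real.sqrt (((a+b)/2)^2) := Real.sqrt_le_sqrt h
    _ = (a+b)/2 := Real.sqrt_sq (by positivity)

lemma denomBound (γ lam c rA sA rB sB : ℝ) (hγ : 0 < γ) (hc : 0 < c)
    (hrB : 0 ≤ rB)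
    (hceq : c = rB - rA - γ^2) (hlam : 1 ≤ lam)
    (h1 : γ/lam + rA/lam^2 ≤ 1/2)
    (h2 : γ*(rA+rB)/lam + rA*rB/lam^2 ≤ c/2) :
    min (c/4) (Real.sqrt c / 2) ≤ norm
      ((((rB:ℂ) + sB*I) - ((rA:ℂ) + sA*I)) - (γ:ℂ)^2
        - (γ:ℂ) * (((rA:ℂ) + sA*I) + ((rB:ℂ) + sB*I)) / (lam:ℂ)
        - ((rA:ℂ) + sA*I) * ((rB:ℂ) + sB*I) / (lam:ℂ)^2) := by
  have hlam0 : (0:ℝ) < lam := lt_of_lt_of_le one_pos hlam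
  have hlam' : lam ≠ 0 := ne_of_gt hlam0
  have hl2 : (0:ℝ) < lam^2 := by positivity
  rw [D_decomp γ lam rA sA rB sB hlam']
  set X : ℝ := rB - rA - γ^2 - γ*(rA+rB)/lam - (rA*rB - sA*sB)/lam^2 with hX
  set Y : ℝ := sB*(1 - γ/lam - rA/lam^2) - sA*(1 + γ/lam + rB/lam^2) with hY
  have hre : ((X:ℂ) + (Y:ℂ)*I).re = X := by simp
  have him : ((X:ℂ) + (Y:ℂ)*I).im = Y := by simp
  by_cases hcase : -(lam^2*(c/4)) ≤ sA*sB
  · have hdiv : -(c/4) ≤ sA*sB/lam^2 := by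
      rw [le_div_iff₀ hl2]
      nlinarith
    have hXb : c/4 ≤ X := by
      have hsplit : X = c - (γ*(rA+rB)/lam + rA*rB/lam^2) + sA*sB/lam^2 := by
        rw [hX, hceq]; ring
      rw [hsplit]; linarith
    calc min (c/4) (Real.sqrt c / 2) ≤ c/4 := min_le_left _ _
      _ ≤ X := hXb
      _ ≤ |X| := le_abs_self X
      _ = |((X:ℂ) + (Y:ℂ)*I).re| := by rw [hre]
      _ ≤ norm ((X:ℂ) + (Y:ℂ)*I) := Complex.abs_re_le_norm _
  · push_neg at hcase
    have hneg : sA*sB < 0 := lt_trans hcase (by nlinarith)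
    have hα : 1/2 ≤ 1 - γ/lam - rA/lam^2 := by linarith
    have hβ : 1/2 ≤ 1 + γ/lam + rB/lam^2 := by
      have : 0 ≤ γ/lam := by positivity
      have : 0 ≤ rB/lam^2 := by positivity
      linarith
    have habs : (|sA| + |sB|)/2 ≤ |Y| := by
      rcases mul_neg_iff.mp hneg with ⟨hsA, hsB⟩ | ⟨hsA, hsB⟩
      · rw [abs_of_pos hsA, abs_of_neg hsB]
        have e1 : sA * (1/2) ≤ sA * (1 + γ/lam + rB/lam^2) :=
          mul_le_mul_of_nonneg_left hβ hsA.le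
        have e2 : (-sB) * (1/2) ≤ (-sB) * (1 - γ/lam - rA/lam^2) :=
          mul_le_mul_of_nonneg_left hα (by linarith)
        have : (sA + -sB)/2 ≤ -Y := by rw [hY]; nlinarith
        calc (sA + -sB)/2 ≤ -Y := this
          _ ≤ |Y| := neg_le_abs Y
      · rw [abs_of_neg hsA, abs_of_pos hsB]
        have e1 : (-sA) * (1/2) ≤ (-sA) * (1 + γ/lam + rB/lam^2) :=
          mul_le_mul_of_nonneg_left hβ (by linarith)
        have e2 : sB * (1/2) ≤ sB * (1 - γ/lam - rA/lam^2) :=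
          mul_le_mul_of_nonneg_left hα hsB.le
        have : (-sA + sB)/2 ≤ Y := by rw [hY]; nlinarith
        calc (-sA + sB)/2 ≤ Y := this
          _ ≤ |Y| := le_abs_self Y
    have hsq : Real.sqrt c / 2 ≤ (|sA| + |sB|)/2 := by
      have h4 : c/4 ≤ |sA| * |sB| := by
        have he : |sA| * |sB| = -(sA*sB) := by rw [← abs_mul, abs_of_neg hneg]
        have hl1 : (1:ℝ) ≤ lam^2 := by
          calc (1:ℝ) = 1*1 := by ring
            _ ≤ lam*lam := mul_le_mul hlam hlam zero_le_one hlam0.le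
            _ = lam^2 := (pow_two lam).symm
        have hA : c/4 ≤ lam^2*(c/4) := le_mul_of_one_le_left (by positivity) hl1
        rw [he]; linarith
      have hsqrt4 : Real.sqrt (c/4) = Real.sqrt c / 2 := by
        rw [show c/4 = c / 2^2 by ring, Real.sqrt_div hc.le, Real.sqrt_sq (by norm_num : (0:ℝ) ≤ 2)]
      calc Real.sqrt c / 2 = Real.sqrt (c/4) := hsqrt4.symm
        _ ≤ Real.sqrt (|sA| * |sB|) := Real.sqrt_le_sqrt h4
        _ ≤ (|sA| + |sB|)/2 := sqrt_mul_le_half_add (abs_nonneg _) (abs_nonneg _)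
    calc min (c/4) (Real.sqrt c / 2) ≤ Real.sqrt c / 2 := min_le_right _ _
      _ ≤ (|sA| + |sB|)/2 := hsq
      _ ≤ |Y| := habs
      _ = |((X:ℂ) + (Y:ℂ)*I).im| := by rw [him]
      _ ≤ norm ((X:ℂ) + (Y:ℂ)*I) := Complex.abs_im_le_norm _

lemma exp_re_eq (tt xx rr ss : ℝ) :
    ((tt:ℂ) * ((rr:ℂ)+ss*I)^2/2 - (xx:ℂ)*((rr:ℂ)+ss*I)).re = tt*(rr^2-ss^2)/2 - xx*rr := by
  simp [Complex.mul_re, Complex.mul_im, Complex.add_re, Complex.add_im, Complex.sub_re,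
    Complex.div_re, Complex.normSq, pow_two]

lemma num_bound (rA sA rB sB : ℝ) :
    norm (((rB:ℂ)+sB*I) - ((rA:ℂ)+sA*I)) ≤ |rB - rA| + (|sA| + |sB|) := by
  calc norm (((rB:ℂ)+sB*I) - ((rA:ℂ)+sA*I))
      = norm (((rB - rA : ℝ):ℂ) + ((sB - sA:ℝ):ℂ)*I) := by congr 1; push_cast; ring
    _ ≤ norm ((rB - rA : ℝ):ℂ) + norm (((sB - sA:ℝ):ℂ)*I) := norm_add_le _ _
    _ = |rB - rA| + |sB - sA| := by
        simp only [norm_mul, Complex.norm_real, Real.norm_eq_abs, Complex.norm_I, mul_one]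
    _ ≤ |rB - rA| + (|sA| + |sB|) := by
        gcongr
        calc |sB - sA| ≤ |sB| + |sA| := abs_sub _ _
          _ = |sA| + |sB| := by ring

lemma q_bound (γ lam rj sj : ℝ) (hγ : 0 < γ) (hlam : 0 < lam) (hrj : 0 ≤ rj) :
    norm ((γ:ℂ)*(lam:ℂ) / ((γ:ℂ)*(lam:ℂ) + ((rj:ℂ)+sj*I))) ≤ 1 := by
  have hre : ((γ:ℂ)*(lam:ℂ) + ((rj:ℂ)+sj*I)).re = γ*lam + rj := by simp
  have hpos : 0 < γ*lam + rj := by positivity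
  have hden : γ*lam ≤ norm ((γ:ℂ)*(lam:ℂ) + ((rj:ℂ)+sj*I)) := by
    calc γ*lam ≤ γ*lam + rj := by linarith
      _ = ((γ:ℂ)*(lam:ℂ) + ((rj:ℂ)+sj*I)).re := hre.symm
      _ ≤ |((γ:ℂ)*(lam:ℂ) + ((rj:ℂ)+sj*I)).re| := le_abs_self _
      _ ≤ norm _ := Complex.abs_re_le_norm _
  rw [norm_div, div_le_one (lt_of_lt_of_le (by positivity) hden)]
  calc norm ((γ:ℂ)*(lam:ℂ)) = γ*lam := by
        rw [← Complex.ofReal_mul]; exact Complex.norm_of_nonneg (by positivity)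
    _ ≤ _ := hden

lemma denom2_ne (γ lam rj sj : ℝ) (hγ : 0 < γ) (hlam : 0 < lam) (hrj : 0 ≤ rj) :
    (γ:ℂ)*(lam:ℂ) + ((rj:ℂ)+sj*I) ≠ 0 := by
  intro h
  have : ((γ:ℂ)*(lam:ℂ) + ((rj:ℂ)+sj*I)).re = 0 := by rw [h]; simp
  simp at this
  nlinarith

lemma self_le_exp (u : ℝ) : u ≤ Real.exp u := by
  have := Real.add_one_le_exp u
  linarith

lemma amgm_div (a t u : ℝ) (ht : 0 < t) (ha : 0 ≤ a) : a*|u| ≤ a^2/t + (t/4)*u^2 := by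
  have key : t*(a*|u|) ≤ t*(a^2/t + (t/4)*u^2) := by
    have h2 : t*(a^2/t + (t/4)*u^2) = a^2 + (t/2)^2*u^2 := by field_simp; ring
    rw [h2]
    nlinarith [sq_nonneg (a - (t/2)*|u|), _root_.sq_abs u]
  exact le_of_mul_le_mul_left key ht
end helpers

noncomputable def fInt (k : ℕ) (γ t : ℝ) (x r : Fin k → ℝ) (lam : ℝ) (s : Fin k → ℝ) : ℂ :=
  (∏ p ∈ Finset.univ.filter (fun p : Fin k × Fin k => p.1 < p.2),
    ((((r p.2 : ℂ) + (s p.2 : ℂ) * Complex.I) - ((r p.1 : ℂ) + (s p.1 : ℂ) * Complex.I)) /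
      ((((r p.2 : ℂ) + (s p.2 : ℂ) * Complex.I) - ((r p.1 : ℂ) + (s p.1 : ℂ) * Complex.I))
        - (γ : ℂ) ^ 2
        - (γ : ℂ) * (((r p.1 : ℂ) + (s p.1 : ℂ) * Complex.I)
            + ((r p.2 : ℂ) + (s p.2 : ℂ) * Complex.I)) / (lam : ℂ)
        - ((r p.1 : ℂ) + (s p.1 : ℂ) * Complex.I)
            * ((r p.2 : ℂ) + (s p.2 : ℂ) * Complex.I) / (lam : ℂ) ^ 2))) *
  ∏ j : Fin k,
    ((γ : ℂ) * (lam : ℂ) / ((γ : ℂ) * (lam : ℂ) + ((r j : ℂ) + (s j : ℂ) * Complex.I))) *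
      Complex.exp ((t : ℂ) * ((r j : ℂ) + (s j : ℂ) * Complex.I) ^ 2 / 2
        - (x j : ℂ) * ((r j : ℂ) + (s j : ℂ) * Complex.I))

noncomputable def ddm (k : ℕ) (γ : ℝ) (r : Fin k → ℝ) (p : Fin k × Fin k) : ℝ :=
  min ((r p.2 - r p.1 - γ^2)/4) (Real.sqrt (r p.2 - r p.1 - γ^2)/2)

noncomputable def Kconst (k : ℕ) (γ t : ℝ) (x r : Fin k → ℝ) : ℝ :=
  (∏ p ∈ Finset.univ.filter (fun p : Fin k × Fin k => p.1 < p.2),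
      (ddm k γ r p)⁻¹ * Real.exp |r p.2 - r p.1|) *
  ∏ j : Fin k, Real.exp (t*(r j)^2/2 + |x j| * r j + (2*(k:ℝ)^2)^2/t)

lemma norm_fInt_le (k : ℕ) (γ t : ℝ) (hγ : 0 < γ) (ht : 0 < t) (x r : Fin k → ℝ)
    (hrpos : ∀ j, 0 < r j)
    (hccpos : ∀ p ∈ Finset.univ.filter (fun p : Fin k × Fin k => p.1 < p.2),
      0 < r p.2 - r p.1 - γ^2)
    (lam : ℝ) (hlam : 1 ≤ lam)
    (hcond : ∀ p ∈ Finset.univ.filter (fun p : Fin k × Fin k => p.1 < p.2),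
      γ/lam + r p.1/lam^2 ≤ 1/2 ∧
      γ*(r p.1 + r p.2)/lam + r p.1*r p.2/lam^2 ≤ (r p.2 - r p.1 - γ^2)/2)
    (s : Fin k → ℝ) :
    ‖fInt k γ t x r lam s‖ ≤ Kconst k γ t x r * ∏ j, Real.exp (-(t/4) * (s j)^2) := by
  classical
  have hlam0 : (0:ℝ) < lam := lt_of_lt_of_le one_pos hlam
  set P := Finset.univ.filter (fun p : Fin k × Fin k => p.1 < p.2) with hPdef
  set Sv := ∑ j, |s j| with hSv
  have hSv0 : 0 ≤ Sv := Finset.sum_nonneg fun j _ => abs_nonneg _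
  have hSle : ∀ j : Fin k, |s j| ≤ Sv := fun j =>
    Finset.single_le_sum (f := fun j => |s j|) (fun _ _ => abs_nonneg _) (Finset.mem_univ j)
  have hddpos : ∀ p ∈ P, 0 < ddm k γ r p := by
    intro p hp
    have hc := hccpos p hp
    exact lt_min (by linarith) (div_pos (Real.sqrt_pos.mpr hc) two_pos)
  -- per-pair bound
  have hpair : ∀ p ∈ P,
      ‖(((r p.2 : ℂ) + (s p.2 : ℂ) * Complex.I) - ((r p.1 : ℂ) + (s p.1 : ℂ) * Complex.I)) /
        ((((r p.2 : ℂ) + (s p.2 : ℂ) * Complex.I) - ((r p.1 : ℂ) + (s p.1 : ℂ) * Complex.I))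
          - (γ : ℂ) ^ 2
          - (γ : ℂ) * (((r p.1 : ℂ) + (s p.1 : ℂ) * Complex.I)
              + ((r p.2 : ℂ) + (s p.2 : ℂ) * Complex.I)) / (lam : ℂ)
          - ((r p.1 : ℂ) + (s p.1 : ℂ) * Complex.I)
              * ((r p.2 : ℂ) + (s p.2 : ℂ) * Complex.I) / (lam : ℂ) ^ 2)‖
      ≤ (ddm k γ r p)⁻¹ * Real.exp |r p.2 - r p.1| * Real.exp (2*Sv) := by
    intro p hp
    obtain ⟨h1, h2⟩ := hcond p hp
    have hc := hccpos p hp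
    have hd := denomBound γ lam (r p.2 - r p.1 - γ^2) (r p.1) (s p.1) (r p.2) (s p.2)
      hγ hc (hrpos p.2).le rfl hlam h1 h2
    have hnum := num_bound (r p.1) (s p.1) (r p.2) (s p.2)
    have hdd := hddpos p hp
    rw [norm_div]
    have hdabs : ddm k γ r p ≤ norm _ := hd
    calc norm _ / norm _
        ≤ (|r p.2 - r p.1| + (|s p.1| + |s p.2|)) / ddm k γ r p :=
          div_le_div₀ (by positivity) hnum hdd hd
      _ = (ddm k γ r p)⁻¹ * (|r p.2 - r p.1| + (|s p.1| + |s p.2|)) := by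
          rw [div_eq_inv_mul]
      _ ≤ (ddm k γ r p)⁻¹ * (Real.exp |r p.2 - r p.1| * Real.exp (2*Sv)) := by
          apply mul_le_mul_of_nonneg_left _ (inv_nonneg.mpr hdd.le)
          calc |r p.2 - r p.1| + (|s p.1| + |s p.2|)
              ≤ Real.exp (|r p.2 - r p.1| + (|s p.1| + |s p.2|)) := self_le_exp _
            _ = Real.exp |r p.2 - r p.1| * Real.exp (|s p.1| + |s p.2|) := Real.exp_add _ _
            _ ≤ Real.exp |r p.2 - r p.1| * Real.exp (2*Sv) := by
                apply mul_le_mul_of_nonneg_left _ (Real.exp_nonneg _)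
                apply Real.exp_le_exp.mpr
                have := hSle p.1; have := hSle p.2; linarith
      _ = (ddm k γ r p)⁻¹ * Real.exp |r p.2 - r p.1| * Real.exp (2*Sv) := by ring
  -- per-j bound
  have hjb : ∀ j : Fin k,
      ‖((γ : ℂ) * (lam : ℂ) / ((γ : ℂ) * (lam : ℂ) + ((r j : ℂ) + (s j : ℂ) * Complex.I))) *
        Complex.exp ((t : ℂ) * ((r j : ℂ) + (s j : ℂ) * Complex.I) ^ 2 / 2
          - (x j : ℂ) * ((r j : ℂ) + (s j : ℂ) * Complex.I))‖
      ≤ Real.exp (t*(r j)^2/2 + |x j| * r j) * Real.exp (-(t/2)*(s j)^2) := by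
    intro j
    rw [norm_mul]
    have h1 : ‖(γ : ℂ) * (lam : ℂ) / ((γ : ℂ) * (lam : ℂ) + ((r j : ℂ) + (s j : ℂ) * Complex.I))‖ ≤ 1 := by
      exact q_bound γ lam (r j) (s j) hγ hlam0 (hrpos j).le
    have h2 : ‖Complex.exp ((t : ℂ) * ((r j : ℂ) + (s j : ℂ) * Complex.I) ^ 2 / 2
          - (x j : ℂ) * ((r j : ℂ) + (s j : ℂ) * Complex.I))‖
        = Real.exp (t*((r j)^2-(s j)^2)/2 - x j * r j) := by
      rw [Complex.norm_exp, exp_re_eq]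
    calc ‖_‖ * ‖_‖ ≤ 1 * (Real.exp (t*((r j)^2-(s j)^2)/2 - x j * r j)) := by
          rw [← h2]
          exact mul_le_mul_of_nonneg_right h1 (norm_nonneg _)
      _ = Real.exp ((t*(r j)^2/2 - x j * r j) + (-(t/2)*(s j)^2)) := by
          rw [one_mul]; congr 1; ring
      _ = Real.exp (t*(r j)^2/2 - x j * r j) * Real.exp (-(t/2)*(s j)^2) := Real.exp_add _ _
      _ ≤ Real.exp (t*(r j)^2/2 + |x j| * r j) * Real.exp (-(t/2)*(s j)^2) := by
          apply mul_le_mul_of_nonneg_right _ (Real.exp_nonneg _)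
          apply Real.exp_le_exp.mpr
          have : -(x j) * r j ≤ |x j| * r j :=
            mul_le_mul_of_nonneg_right (neg_le_abs (x j)) (hrpos j).le
          linarith
  -- assemble
  unfold fInt
  rw [norm_mul, norm_prod, norm_prod]
  rw [← hPdef]
  have hcard : P.card ≤ k^2 := by
    calc P.card ≤ (Finset.univ : Finset (Fin k × Fin k)).card := Finset.card_filter_le _ _
      _ = k^2 := by simp [Finset.card_univ, pow_two]
  have hexp1 : (1:ℝ) ≤ Real.exp (2*Sv) := Real.one_le_exp (by linarith)
  have hKp0 : 0 ≤ ∏ p ∈ P, ((ddm k γ r p)⁻¹ * Real.exp |r p.2 - r p.1|) :=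
    Finset.prod_nonneg fun p hp => mul_nonneg (inv_nonneg.mpr (hddpos p hp).le) (Real.exp_nonneg _)
  calc (∏ p ∈ P, ‖_‖) * (∏ j : Fin k, ‖_‖)
      ≤ (∏ p ∈ P, ((ddm k γ r p)⁻¹ * Real.exp |r p.2 - r p.1| * Real.exp (2*Sv))) *
        (∏ j : Fin k, Real.exp (t*(r j)^2/2 + |x j| * r j) * Real.exp (-(t/2)*(s j)^2)) := by
        apply mul_le_mul
        · exact Finset.prod_le_prod (fun p _ => norm_nonneg _) hpair
        · exact Finset.prod_le_prod (fun j _ => norm_nonneg _) (fun j _ => hjb j)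
        · exact Finset.prod_nonneg fun j _ => norm_nonneg _
        · exact Finset.prod_nonneg fun p hp =>
            mul_nonneg (mul_nonneg (inv_nonneg.mpr (hddpos p hp).le) (Real.exp_nonneg _))
              (Real.exp_nonneg _)
    _ = ((∏ p ∈ P, ((ddm k γ r p)⁻¹ * Real.exp |r p.2 - r p.1|)) * Real.exp (2*Sv) ^ P.card) *
        (∏ j : Fin k, Real.exp (t*(r j)^2/2 + |x j| * r j) * Real.exp (-(t/2)*(s j)^2)) := by
        rw [Finset.prod_mul_distrib, Finset.prod_const]
    _ ≤ ((∏ p ∈ P, ((ddm k γ r p)⁻¹ * Real.exp |r p.2 - r p.1|)) * Real.exp (2*Sv) ^ (k^2)) *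
        (∏ j : Fin k, Real.exp (t*(r j)^2/2 + |x j| * r j) * Real.exp (-(t/2)*(s j)^2)) := by
        apply mul_le_mul_of_nonneg_right _ (Finset.prod_nonneg fun j _ =>
          mul_nonneg (Real.exp_nonneg _) (Real.exp_nonneg _))
        exact mul_le_mul_of_nonneg_left (pow_le_pow_right₀ hexp1 hcard) hKp0
    _ = (∏ p ∈ P, ((ddm k γ r p)⁻¹ * Real.exp |r p.2 - r p.1|)) *
        ∏ j : Fin k, (Real.exp (2*(k:ℝ)^2*|s j|) *
          (Real.exp (t*(r j)^2/2 + |x j| * r j) * Real.exp (-(t/2)*(s j)^2))) := by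
        have hpow : Real.exp (2*Sv) ^ (k^2) = ∏ j : Fin k, Real.exp (2*(k:ℝ)^2*|s j|) := by
          rw [← Real.exp_nat_mul, ← Real.exp_sum]
          congr 1
          simp only [hSv, Finset.mul_sum]
          exact Finset.sum_congr rfl fun j _ => by push_cast; ring
        rw [hpow, mul_assoc, ← Finset.prod_mul_distrib]
    _ ≤ (∏ p ∈ P, ((ddm k γ r p)⁻¹ * Real.exp |r p.2 - r p.1|)) *
        ∏ j : Fin k, (Real.exp (t*(r j)^2/2 + |x j| * r j + (2*(k:ℝ)^2)^2/t) *
          Real.exp (-(t/4)*(s j)^2)) := by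
        apply mul_le_mul_of_nonneg_left _ hKp0
        apply Finset.prod_le_prod
        · intro j _; positivity
        · intro j _
          rw [← Real.exp_add, ← Real.exp_add, ← Real.exp_add]
          apply Real.exp_le_exp.mpr
          have := amgm_div (2*(k:ℝ)^2) t (s j) ht (by positivity)
          linarith
    _ = Kconst k γ t x r * ∏ j, Real.exp (-(t/4) * (s j)^2) := by
        simp only [Finset.prod_mul_distrib]
        unfold Kconst
        rw [← hPdef]
        simp only [Finset.prod_mul_distrib]
        ring

noncomputable def gInt (k : ℕ) (γ t : ℝ) (x r : Fin k → ℝ) (s : Fin k → ℝ) : ℂ :=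
  (∏ p ∈ Finset.univ.filter (fun p : Fin k × Fin k => p.1 < p.2),
    ((((r p.2 : ℂ) + (s p.2 : ℂ) * Complex.I) - ((r p.1 : ℂ) + (s p.1 : ℂ) * Complex.I)) /
      ((((r p.2 : ℂ) + (s p.2 : ℂ) * Complex.I) - ((r p.1 : ℂ) + (s p.1 : ℂ) * Complex.I))
        - (γ : ℂ) ^ 2))) *
  ∏ j : Fin k,
    Complex.exp ((t : ℂ) * ((r j : ℂ) + (s j : ℂ) * Complex.I) ^ 2 / 2
      - (x j : ℂ) * ((r j : ℂ) + (s j : ℂ) * Complex.I))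

lemma denom_ne_zero (γ lam c rA sA rB sB : ℝ) (hγ : 0 < γ) (hc : 0 < c) (hrB : 0 ≤ rB)
    (hceq : c = rB - rA - γ^2) (hlam : 1 ≤ lam)
    (h1 : γ/lam + rA/lam^2 ≤ 1/2)
    (h2 : γ*(rA+rB)/lam + rA*rB/lam^2 ≤ c/2) :
    (((rB:ℂ) + sB*I) - ((rA:ℂ) + sA*I)) - (γ:ℂ)^2
      - (γ:ℂ) * (((rA:ℂ) + sA*I) + ((rB:ℂ) + sB*I)) / (lam:ℂ)
      - ((rA:ℂ) + sA*I) * ((rB:ℂ) + sB*I) / (lam:ℂ)^2 ≠ 0 := by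
  intro h0
  have hb := denomBound γ lam c rA sA rB sB hγ hc hrB hceq hlam h1 h2
  rw [h0] at hb
  simp only [norm_zero] at hb
  have hmin : 0 < min (c/4) (Real.sqrt c/2) :=
    lt_min (by linarith) (div_pos (Real.sqrt_pos.mpr hc) two_pos)
  linarith

lemma limit_denom_ne_zero (γ rA sA rB sB : ℝ) (hc : 0 < rB - rA - γ^2) :
    (((rB:ℂ) + sB*I) - ((rA:ℂ) + sA*I)) - (γ:ℂ)^2 ≠ 0 := by
  intro h
  have h' := congrArg Complex.re h
  simp [pow_two, Complex.mul_re] at h'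
  nlinarith [h', hc]

lemma fInt_continuous (k : ℕ) (γ t : ℝ) (x r : Fin k → ℝ) (lam : ℝ)
    (hne : ∀ (s : Fin k → ℝ) (p : Fin k × Fin k), p.1 < p.2 →
      (((r p.2 : ℂ) + (s p.2 : ℂ) * Complex.I) - ((r p.1 : ℂ) + (s p.1 : ℂ) * Complex.I))
        - (γ : ℂ) ^ 2
        - (γ : ℂ) * (((r p.1 : ℂ) + (s p.1 : ℂ) * Complex.I)
            + ((r p.2 : ℂ) + (s p.2 : ℂ) * Complex.I)) / (lam : ℂ)
        - ((r p.1 : ℂ) + (s p.1 : ℂ) * Complex.I)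
            * ((r p.2 : ℂ) + (s p.2 : ℂ) * Complex.I) / (lam : ℂ) ^ 2 ≠ 0)
    (hne2 : ∀ (s : Fin k → ℝ) (j : Fin k),
      (γ : ℂ) * (lam : ℂ) + ((r j : ℂ) + (s j : ℂ) * Complex.I) ≠ 0) :
    Continuous (fInt k γ t x r lam) := by
  unfold fInt
  apply Continuous.mul
  · apply continuous_finset_prod
    intro p hp
    have hAB : p.1 < p.2 := (Finset.mem_filter.mp hp).2
    exact Continuous.div (by fun_prop) (by fun_prop) (fun s => hne s p hAB)
  · apply continuous_finset_prod
    intro j _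
    exact Continuous.mul
      (Continuous.div (by fun_prop) (by fun_prop) (fun s => hne2 s j)) (by fun_prop)

lemma inv_cast_tendsto : Tendsto (fun lam : ℝ => ((lam:ℂ))⁻¹) atTop (𝓝 0) := by
  have h := (Complex.continuous_ofReal.tendsto (0:ℝ)).comp tendsto_inv_atTop_zero
  simpa [Function.comp_def, Complex.ofReal_inv] using h

lemma inv_sq_cast_tendsto : Tendsto (fun lam : ℝ => ((lam:ℂ)^2)⁻¹) atTop (𝓝 0) := by
  have h := (inv_cast_tendsto.pow 2)
  simpa [inv_pow] using h

lemma fInt_tendsto (k : ℕ) (γ t : ℝ) (hγ : 0 < γ) (x r : Fin k → ℝ)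
    (hrpos : ∀ j, 0 < r j)
    (hccpos : ∀ p ∈ Finset.univ.filter (fun p : Fin k × Fin k => p.1 < p.2),
      0 < r p.2 - r p.1 - γ^2)
    (s : Fin k → ℝ) :
    Tendsto (fun lam : ℝ => fInt k γ t x r lam s) atTop (𝓝 (gInt k γ t x r s)) := by
  unfold fInt gInt
  apply Tendsto.mul
  · apply tendsto_finset_prod
    intro p hp
    have hc := hccpos p hp
    have hne := limit_denom_ne_zero γ (r p.1) (s p.1) (r p.2) (s p.2) hc
    apply Tendsto.div tendsto_const_nhds _ hne
    have h3 : Tendsto (fun lam : ℝ =>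
        (γ:ℂ) * (((r p.1 : ℂ) + (s p.1 : ℂ) * Complex.I)
          + ((r p.2 : ℂ) + (s p.2 : ℂ) * Complex.I)) / (lam:ℂ)) atTop (𝓝 0) := by
      have := inv_cast_tendsto.const_mul
        ((γ:ℂ) * (((r p.1 : ℂ) + (s p.1 : ℂ) * Complex.I)
          + ((r p.2 : ℂ) + (s p.2 : ℂ) * Complex.I)))
      simpa [div_eq_mul_inv] using this
    have h4 : Tendsto (fun lam : ℝ =>
        ((r p.1 : ℂ) + (s p.1 : ℂ) * Complex.I)
          * ((r p.2 : ℂ) + (s p.2 : ℂ) * Complex.I) / (lam:ℂ)^2) atTop (𝓝 0) := by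
      have := inv_sq_cast_tendsto.const_mul
        (((r p.1 : ℂ) + (s p.1 : ℂ) * Complex.I) * ((r p.2 : ℂ) + (s p.2 : ℂ) * Complex.I))
      simpa [div_eq_mul_inv] using this
    have := (tendsto_const_nhds (x := (((r p.2 : ℂ) + (s p.2 : ℂ) * Complex.I)
        - ((r p.1 : ℂ) + (s p.1 : ℂ) * Complex.I)) - (γ:ℂ)^2) (f := atTop)).sub h3 |>.sub h4
    simpa using this
  · apply tendsto_finset_prod
    intro j _
    have hq : Tendsto (fun lam : ℝ =>
        (γ : ℂ) * (lam : ℂ) / ((γ : ℂ) * (lam : ℂ) + ((r j : ℂ) + (s j : ℂ) * Complex.I)))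
        atTop (𝓝 1) := by
      have h1 : Tendsto (fun lam : ℝ =>
          1 + ((r j : ℂ) + (s j : ℂ) * Complex.I) * (γ:ℂ)⁻¹ * ((lam:ℂ))⁻¹) atTop (𝓝 1) := by
        have := inv_cast_tendsto.const_mul (((r j : ℂ) + (s j : ℂ) * Complex.I) * (γ:ℂ)⁻¹)
        have h2 := (tendsto_const_nhds (x := (1:ℂ)) (f := atTop (α := ℝ))).add this
        simpa [mul_assoc] using h2
      have h2 := h1.inv₀ one_ne_zero
      rw [inv_one] at h2
      apply h2.congr'
      filter_upwards [eventually_gt_atTop (0:ℝ)] with lam hl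
      have hγc : (γ:ℂ) ≠ 0 := Complex.ofReal_ne_zero.mpr (ne_of_gt hγ)
      have hlc : (lam:ℂ) ≠ 0 := Complex.ofReal_ne_zero.mpr (ne_of_gt hl)
      have hd : (γ : ℂ) * (lam : ℂ) + ((r j : ℂ) + (s j : ℂ) * Complex.I) ≠ 0 :=
        denom2_ne γ lam (r j) (s j) hγ hl (hrpos j).le
      field_simp
    have := hq.mul (tendsto_const_nhds (x := Complex.exp ((t : ℂ) * ((r j : ℂ) + (s j : ℂ) * Complex.I) ^ 2 / 2
            - (x j : ℂ) * ((r j : ℂ) + (s j : ℂ) * Complex.I))) (f := atTop (α := ℝ)))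
    simpa using this

/-- For sufficiently large `λ` the integrand of `F(λ)` has nonvanishing denominators, and
`F(λ)` converges as `λ → ∞` to the moment formula `G` of the multiplicative-noise
stochastic heat equation. -/
theorem F_tendsto_G (k : ℕ) (hk : 1 ≤ k) (γ t : ℝ) (hγ : 0 < γ) (ht : 0 < t)
    (x r : Fin k → ℝ) (hr1 : 0 < r ⟨0, hk⟩)
    (hstep : ∀ i : ℕ, ∀ h : i + 1 < k,
      r ⟨i, Nat.lt_of_succ_lt h⟩ + γ ^ 2 < r ⟨i + 1, h⟩) :
    (∀ᶠ lam : ℝ in atTop, ∀ s : Fin k → ℝ,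
      (∀ A B : Fin k, A < B →
        (((r B : ℂ) + (s B : ℂ) * Complex.I) - ((r A : ℂ) + (s A : ℂ) * Complex.I))
          - (γ : ℂ) ^ 2
          - (γ : ℂ) * (((r A : ℂ) + (s A : ℂ) * Complex.I)
              + ((r B : ℂ) + (s B : ℂ) * Complex.I)) / (lam : ℂ)
          - ((r A : ℂ) + (s A : ℂ) * Complex.I)
              * ((r B : ℂ) + (s B : ℂ) * Complex.I) / (lam : ℂ) ^ 2 ≠ 0) ∧
      (∀ j : Fin k, (γ : ℂ) * (lam : ℂ) + ((r j : ℂ) + (s j : ℂ) * Complex.I) ≠ 0)) ∧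
    Tendsto (F k γ t x r) atTop (nhds (G k γ t x r)) := by
  classical
  have hγ2 : 0 < γ^2 := by positivity
  -- monotonicity of r
  have key : ∀ (n m : ℕ) (hm : m < k) (hn : n < k), m < n → r ⟨m, hm⟩ + γ^2 < r ⟨n, hn⟩ := by
    intro n
    induction n with
    | zero => intro m hm hn hlt; omega
    | succ p ih =>
      intro m hm hn hlt
      have hp : p < k := Nat.lt_of_succ_lt hn
      rcases Nat.lt_or_ge m p with h | h
      · have h1 := ih m hm hp h
        have h2 := hstep p hn
        linarith
      · have : m = p := by omega
        subst this
        exact hstep m hn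
  have hmono : ∀ A B : Fin k, A < B → r A + γ^2 < r B := by
    intro A B hAB
    have := key B.1 A.1 A.isLt B.isLt (by exact hAB)
    simpa using this
  have hrpos : ∀ j : Fin k, 0 < r j := by
    intro j
    by_cases hj : j = ⟨0, hk⟩
    · rw [hj]; exact hr1
    · have h0 : (⟨0, hk⟩ : Fin k) < j := by
        rcases Nat.eq_zero_or_pos j.1 with h | h
        · exact absurd (Fin.ext h : j = ⟨0, hk⟩) hj
        · exact Fin.mk_lt_of_lt_val h
      have := hmono ⟨0, hk⟩ j h0
      linarith
  have hccpos : ∀ p ∈ Finset.univ.filter (fun p : Fin k × Fin k => p.1 < p.2),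
      0 < r p.2 - r p.1 - γ^2 := by
    intro p hp
    have hAB : p.1 < p.2 := (Finset.mem_filter.mp hp).2
    have := hmono p.1 p.2 hAB
    linarith
  -- eventual good conditions
  have Hgood : ∀ᶠ lam : ℝ in atTop, 1 ≤ lam ∧
      ∀ p ∈ Finset.univ.filter (fun p : Fin k × Fin k => p.1 < p.2),
        γ/lam + r p.1/lam^2 ≤ 1/2 ∧
        γ*(r p.1 + r p.2)/lam + r p.1*r p.2/lam^2 ≤ (r p.2 - r p.1 - γ^2)/2 := by
    refine (eventually_ge_atTop 1).and ?_
    rw [eventually_all_finset]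
    intro p hp
    have hc := hccpos p hp
    have htend1 : Tendsto (fun lam : ℝ => γ/lam + r p.1/lam^2) atTop (𝓝 0) := by
      have h1 : Tendsto (fun lam : ℝ => γ/lam) atTop (𝓝 0) :=
        tendsto_const_nhds.div_atTop tendsto_id
      have h2 : Tendsto (fun lam : ℝ => r p.1/lam^2) atTop (𝓝 0) :=
        tendsto_const_nhds.div_atTop (tendsto_pow_atTop two_ne_zero)
      simpa using h1.add h2
    have htend2 : Tendsto (fun lam : ℝ => γ*(r p.1 + r p.2)/lam + r p.1*r p.2/lam^2)
        atTop (𝓝 0) := by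
      have h1 : Tendsto (fun lam : ℝ => γ*(r p.1 + r p.2)/lam) atTop (𝓝 0) :=
        tendsto_const_nhds.div_atTop tendsto_id
      have h2 : Tendsto (fun lam : ℝ => r p.1*r p.2/lam^2) atTop (𝓝 0) :=
        tendsto_const_nhds.div_atTop (tendsto_pow_atTop two_ne_zero)
      simpa using h1.add h2
    exact (htend1.eventually (eventually_le_nhds (by norm_num))).and
      (htend2.eventually (eventually_le_nhds (by linarith)))
  -- nonvanishing part
  have hne_of_good : ∀ lam : ℝ, 1 ≤ lam →
      (∀ p ∈ Finset.univ.filter (fun p : Fin k × Fin k => p.1 < p.2),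
        γ/lam + r p.1/lam^2 ≤ 1/2 ∧
        γ*(r p.1 + r p.2)/lam + r p.1*r p.2/lam^2 ≤ (r p.2 - r p.1 - γ^2)/2) →
      ∀ (s : Fin k → ℝ) (A B : Fin k), A < B →
        (((r B : ℂ) + (s B : ℂ) * Complex.I) - ((r A : ℂ) + (s A : ℂ) * Complex.I))
          - (γ : ℂ) ^ 2
          - (γ : ℂ) * (((r A : ℂ) + (s A : ℂ) * Complex.I)
              + ((r B : ℂ) + (s B : ℂ) * Complex.I)) / (lam : ℂ)
          - ((r A : ℂ) + (s A : ℂ) * Complex.I)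
              * ((r B : ℂ) + (s B : ℂ) * Complex.I) / (lam : ℂ) ^ 2 ≠ 0 := by
    intro lam hlam hcond s A B hAB
    have hmem : (A, B) ∈ Finset.univ.filter (fun p : Fin k × Fin k => p.1 < p.2) := by
      simp [hAB]
    obtain ⟨h1, h2⟩ := hcond (A, B) hmem
    exact denom_ne_zero γ lam (r B - r A - γ^2) (r A) (s A) (r B) (s B) hγ
      (hccpos (A, B) hmem) (hrpos B).le rfl hlam h1 h2
  constructor
  · filter_upwards [Hgood] with lam hg s
    refine ⟨fun A B hAB => hne_of_good lam hg.1 hg.2 s A B hAB, fun j => ?_⟩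
    exact denom2_ne γ lam (r j) (s j) hγ (lt_of_lt_of_le one_pos hg.1) (hrpos j).le
  · -- dominated convergence
    have hbound_int : Integrable
        (fun s : Fin k → ℝ => Kconst k γ t x r * ∏ j, Real.exp (-(t/4) * (s j)^2)) := by
      apply Integrable.const_mul
      exact Integrable.fintype_prod (f := fun (j : Fin k) (u : ℝ) => Real.exp (-(t/4) * u^2))
        (fun j => integrable_exp_neg_mul_sq (by positivity))
    have hmain : Tendsto (fun lam : ℝ => ∫ s : Fin k → ℝ, fInt k γ t x r lam s) atTop
        (𝓝 (∫ s : Fin k → ℝ, gInt k γ t x r s)) := by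
      apply tendsto_integral_filter_of_dominated_convergence
        (fun s : Fin k → ℝ => Kconst k γ t x r * ∏ j, Real.exp (-(t/4) * (s j)^2))
      · filter_upwards [Hgood] with lam hg
        refine (fInt_continuous k γ t x r lam ?_ ?_).aestronglyMeasurable
        · intro s p hAB
          exact hne_of_good lam hg.1 hg.2 s p.1 p.2 hAB
        · intro s j
          exact denom2_ne γ lam (r j) (s j) hγ (lt_of_lt_of_le one_pos hg.1) (hrpos j).le
      · filter_upwards [Hgood] with lam hg
        exact ae_of_all _ (norm_fInt_le k γ t hγ ht x r hrpos hccpos lam hg.1 hg.2)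
      · exact hbound_int
      · exact ae_of_all _ (fInt_tendsto k γ t hγ x r hrpos hccpos)
    have hFeq : F k γ t x r = fun lam =>
        ((((2 * Real.pi) ^ k)⁻¹ : ℝ) : ℂ) * ∫ s : Fin k → ℝ, fInt k γ t x r lam s := rfl
    have hGeq : G k γ t x r =
        ((((2 * Real.pi) ^ k)⁻¹ : ℝ) : ℂ) * ∫ s : Fin k → ℝ, gInt k γ t x r s := rfl
    rw [hFeq, hGeq]
    exact hmain.const_mul _
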